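/- Let λ₀ be a real number with 0 < λ₀ < 1/2, and for real n₁, n₂ with n₁² + n₂² = 1 define G(λ₀, n₁, n₂) = n₁²/3 + (λ₀n₁²n₂/3)·log((1 + 4λ₀² − 4λ₀n₂)/(1 + 4λ₀² + 4λ₀n₂)) + |n₁|·(1/(λ₀π²) + (λ₀/3)·(2n₂² − 1))·(arctan(4λ₀|n₁|/(4λ₀² − 1)) + π). Then (1/π) ∫₀^π [G(λ₀, cos ν, sin ν) + G(λ₀, sin ν, cos ν)] dν = 4/(π²λ₀) − (4/9)·λ₀ + 1/3 − 4/π². -/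

import Mathlib

open Real
set_option maxHeartbeats 1000000

/-- The function `G(λ₀, n₁, n₂)` from the analysis of the finite-sample error of the
monogenic unidirectionality measure for a random plane wave. -/
noncomputable def planeWaveG (lam0 n1 n2 : ℝ) : ℝ :=
  n1 ^ 2 / 3
    + (lam0 * n1 ^ 2 * n2 / 3) *
        Real.log ((1 + 4 * lam0 ^ 2 - 4 * lam0 * n2) / (1 + 4 * lam0 ^ 2 + 4 * lam0 * n2))
    + |n1| * (1 / (lam0 * π ^ 2) + (lam0 / 3) * (2 * n2 ^ 2 - 1)) *
        (Real.arctan (4 * lam0 * |n1| / (4 * lam0 ^ 2 - 1)) + π)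

lemma pw_div_helper (n a b d : ℝ) (hd : d ≠ 0) :
    1/(1+(n/d)^2)*((a*d - n*b)/d^2) = (a*d - n*b)/(d^2+n^2) := by
  have h2 : d^2 ≠ 0 := pow_ne_zero 2 hd
  field_simp

noncomputable def pw0 (l : ℝ) : ℝ :=
  -(2*(1+4*l^2)*l/9)*(2*(4*l)^2-(1+4*l^2)^2)/(4*l)^3
  - (1-4*l^2)*(l/3 - 1/(l*π^2))/(4*l)
  + (2*l/9)*(1-4*l^2)*(1+4*l^2)^2/(4*l)^3

noncomputable def pwD (l : ℝ) : ℝ :=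
  -(2*(1+4*l^2)*l/9)*(1-4*l^2)^4/(4*l)^3
  + (1-4*l^2)*(l/3 - 1/(l*π^2))*(1+4*l^2)^2/(4*l)
  - (2*l/9)*(1-4*l^2)*(1+4*l^2)^4/(4*l)^3

noncomputable def pwC (l : ℝ) : ℝ := 2*(1+4*l^2)^2 - (4*l)^2
noncomputable def pwE (l : ℝ) : ℝ := (4*l)^2
noncomputable def pws (l : ℝ) : ℝ := 2*(1+4*l^2)*(1-4*l^2)

noncomputable def pwF (l x : ℝ) : ℝ :=
  x/6 - Real.sin x * Real.cos x/6 + pw0 l * x + (1/9)*(x/2 + Real.sin x * Real.cos x/2)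
  + (l/9) * Real.sin x ^ 3 *
      (Real.log (1 + 4*l^2 - 4*l*Real.cos x) - Real.log (1 + 4*l^2 + 4*l*Real.cos x))
  + ((l/3 - 1/(l*π^2)) * Real.cos x - 2*l/9 * Real.cos x ^ 3) *
      (Real.arctan (4*l*Real.sin x/(4*l^2-1)) + π)
  + pwD l * (2*x + 2*Real.arctan (2*pwE l*(Real.sin x*Real.cos x) /
      (pwC l + pws l - pwE l*(Real.cos x^2 - Real.sin x^2)))) / pws l

lemma pwF_hasDerivAt (l x : ℝ) (hl0 : 0 < l) (hl1 : l < 1/2) :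
    HasDerivAt (pwF l)
      ( 1/6 - (Real.cos x^2 - Real.sin x^2)/6 + pw0 l
          + (1/9)*(1/2 + (Real.cos x^2 - Real.sin x^2)/2)
        + ((l/3)*Real.sin x^2*Real.cos x*
            (Real.log (1+4*l^2-4*l*Real.cos x) - Real.log (1+4*l^2+4*l*Real.cos x))
          + (4*l^2/9)*(Real.sin x^2)^2*(1/(1+4*l^2-4*l*Real.cos x) + 1/(1+4*l^2+4*l*Real.cos x)))
        + (Real.sin x * (1/(l*π^2) + l/3*(2*Real.cos x^2 - 1)) *
            (Real.arctan (4*l*Real.sin x/(4*l^2-1)) + π)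
          + ((l/3 - 1/(l*π^2))*Real.cos x - 2*l/9*Real.cos x^3) * (4*l*Real.cos x*(4*l^2-1))
              / ((4*l^2-1)^2 + (4*l)^2*Real.sin x^2))
        + pwD l * (2 + 2*(2*pwE l*(Real.cos x^2 - Real.sin x^2)
                * (pwC l + pws l - pwE l*(Real.cos x^2 - Real.sin x^2))
              - 8*(pwE l)^2*(Real.sin x^2*Real.cos x^2))
            / ((pwC l + pws l - pwE l*(Real.cos x^2 - Real.sin x^2))^2
              + 4*(pwE l)^2*(Real.sin x^2*Real.cos x^2))) / pws l ) x := by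
  have h4l2 : 4*l^2 < 1 := by nlinarith
  have h4l1 : 4*l^2 - 1 ≠ 0 := by nlinarith
  have hA1 : 0 < 1 + 4*l^2 - 4*l*Real.cos x := by
    nlinarith [Real.cos_le_one x, mul_pos (show (0:ℝ) < 1-2*l by linarith)
      (show (0:ℝ) < 1-2*l by linarith)]
  have hA2 : 0 < 1 + 4*l^2 + 4*l*Real.cos x := by
    nlinarith [Real.neg_one_le_cos x, mul_pos (show (0:ℝ) < 1-2*l by linarith)
      (show (0:ℝ) < 1-2*l by linarith)]
  have hdd : 0 < pwC l + pws l - pwE l*(Real.cos x^2 - Real.sin x^2) := by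
    simp only [pwC, pwE, pws]
    nlinarith [sq_nonneg (Real.sin x), Real.cos_sq_le_one x,
      mul_pos (show (0:ℝ) < 1-4*l^2 by linarith) (show (0:ℝ) < 1+4*l^2 by positivity)]
  have ht1 : HasDerivAt (fun y : ℝ => y/6) ((1:ℝ)/6) x := by
    simpa using (hasDerivAt_id x).div_const 6
  have ht2 : HasDerivAt (fun y : ℝ => Real.sin y * Real.cos y/6)
      ((Real.cos x^2 - Real.sin x^2)/6) x := by
    have := ((Real.hasDerivAt_sin x).mul (Real.hasDerivAt_cos x)).div_const 6
    refine this.congr_deriv ?_; ring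
  have ht3 : HasDerivAt (fun y : ℝ => pw0 l * y) (pw0 l) x := by
    simpa using (hasDerivAt_id x).const_mul (pw0 l)
  have ht4 : HasDerivAt (fun y : ℝ => (1/9)*(y/2 + Real.sin y * Real.cos y/2))
      ((1/9)*(1/2 + (Real.cos x^2 - Real.sin x^2)/2)) x := by
    have := (((hasDerivAt_id x).div_const 2).add
      (((Real.hasDerivAt_sin x).mul (Real.hasDerivAt_cos x)).div_const 2)).const_mul (1/9)
    refine this.congr_deriv ?_; ring
  have hlog1 : HasDerivAt (fun y : ℝ => Real.log (1 + 4*l^2 - 4*l*Real.cos y))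
      (4*l*Real.sin x/(1 + 4*l^2 - 4*l*Real.cos x)) x := by
    have := (((Real.hasDerivAt_cos x).const_mul (4*l)).const_sub (1+4*l^2)).log hA1.ne'
    convert this using 1; ring
  have hlog2 : HasDerivAt (fun y : ℝ => Real.log (1 + 4*l^2 + 4*l*Real.cos y))
      (-(4*l*Real.sin x)/(1 + 4*l^2 + 4*l*Real.cos x)) x := by
    have := (((Real.hasDerivAt_cos x).const_mul (4*l)).const_add (1+4*l^2)).log hA2.ne'
    convert this using 1; ring
  have hpow : HasDerivAt (fun y : ℝ => Real.sin y ^ 3) (3*Real.sin x^2*Real.cos x) x := by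
    have := (Real.hasDerivAt_sin x).pow 3
    refine this.congr_deriv ?_; norm_num
  have ht5 : HasDerivAt (fun y : ℝ => (l/9) * Real.sin y ^ 3 *
      (Real.log (1 + 4*l^2 - 4*l*Real.cos y) - Real.log (1 + 4*l^2 + 4*l*Real.cos y)))
      ((l/3)*Real.sin x^2*Real.cos x*
          (Real.log (1+4*l^2-4*l*Real.cos x) - Real.log (1+4*l^2+4*l*Real.cos x))
        + (4*l^2/9)*(Real.sin x^2)^2*(1/(1+4*l^2-4*l*Real.cos x) + 1/(1+4*l^2+4*l*Real.cos x))) x := by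
    have := (hpow.const_mul (l/9)).mul (hlog1.sub hlog2)
    refine this.congr_deriv ?_
    simp only [Pi.sub_apply]
    field_simp
    ring
  have hv : HasDerivAt (fun y : ℝ => (l/3 - 1/(l*π^2)) * Real.cos y - 2*l/9 * Real.cos y ^ 3)
      (-(l/3 - 1/(l*π^2))*Real.sin x + 2*l/3*Real.cos x^2*Real.sin x) x := by
    have := (((Real.hasDerivAt_cos x).const_mul (l/3 - 1/(l*π^2))).sub
      (((Real.hasDerivAt_cos x).pow 3).const_mul (2*l/9)))
    refine this.congr_deriv ?_; norm_num; ring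
  have hQ : HasDerivAt (fun y : ℝ => Real.arctan (4*l*Real.sin y/(4*l^2-1)) + π)
      ((4*l*Real.cos x*(4*l^2-1)) / ((4*l^2-1)^2 + (4*l)^2*Real.sin x^2)) x := by
    have := ((((Real.hasDerivAt_sin x).const_mul (4*l)).div_const (4*l^2-1)).arctan).add_const π
    refine this.congr_deriv ?_
    have hpos : (0:ℝ) < 1 + (4*l*Real.sin x/(4*l^2-1))^2 := by positivity
    have hpos2 : (0:ℝ) < (4*l^2-1)^2 + (4*l)^2*Real.sin x^2 := by
      nlinarith [mul_pos (show (0:ℝ) < 1-4*l^2 by nlinarith) (show (0:ℝ) < 1-4*l^2 by nlinarith), sq_nonneg (4*l*Real.sin x)]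
    field_simp
  have ht6 : HasDerivAt (fun y : ℝ => ((l/3 - 1/(l*π^2)) * Real.cos y - 2*l/9 * Real.cos y ^ 3) *
      (Real.arctan (4*l*Real.sin y/(4*l^2-1)) + π))
      (Real.sin x * (1/(l*π^2) + l/3*(2*Real.cos x^2 - 1)) *
          (Real.arctan (4*l*Real.sin x/(4*l^2-1)) + π)
        + ((l/3 - 1/(l*π^2))*Real.cos x - 2*l/9*Real.cos x^3) * (4*l*Real.cos x*(4*l^2-1))
            / ((4*l^2-1)^2 + (4*l)^2*Real.sin x^2)) x := by
    have := hv.mul hQ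
    refine this.congr_deriv ?_
    ring
  have hnum : HasDerivAt (fun y : ℝ => 2*pwE l*(Real.sin y*Real.cos y))
      (2*pwE l*(Real.cos x^2 - Real.sin x^2)) x := by
    have := ((Real.hasDerivAt_sin x).mul (Real.hasDerivAt_cos x)).const_mul (2*pwE l)
    refine this.congr_deriv ?_; ring
  have hden : HasDerivAt (fun y : ℝ => pwC l + pws l - pwE l*(Real.cos y^2 - Real.sin y^2))
      (4*pwE l*(Real.sin x*Real.cos x)) x := by
    have := ((((Real.hasDerivAt_cos x).pow 2).sub ((Real.hasDerivAt_sin x).pow 2)).const_mul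
      (pwE l)).const_sub (pwC l + pws l)
    refine this.congr_deriv ?_; norm_num; ring
  have hu := (hnum.div hden hdd.ne').arctan
  have ht7 : HasDerivAt (fun y : ℝ => pwD l * (2*y + 2*Real.arctan (2*pwE l*(Real.sin y*Real.cos y) /
        (pwC l + pws l - pwE l*(Real.cos y^2 - Real.sin y^2)))) / pws l)
      (pwD l * (2 + 2*(2*pwE l*(Real.cos x^2 - Real.sin x^2)
              * (pwC l + pws l - pwE l*(Real.cos x^2 - Real.sin x^2))
            - 8*(pwE l)^2*(Real.sin x^2*Real.cos x^2))
          / ((pwC l + pws l - pwE l*(Real.cos x^2 - Real.sin x^2))^2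
            + 4*(pwE l)^2*(Real.sin x^2*Real.cos x^2))) / pws l) x := by
    have := ((((hasDerivAt_id x).const_mul 2).add (hu.const_mul 2)).const_mul (pwD l)).div_const (pws l)
    refine this.congr_deriv ?_
    simp only [Pi.div_apply]
    rw [pw_div_helper _ _ _ _ hdd.ne']
    ring
  exact ((((((ht1.sub ht2).add ht3).add ht4).add ht5).add ht6).add ht7)

lemma pw_key (l c s1 L1 L2 AT : ℝ) (hl0 : 0 < l) (hl1 : l < 1/2) (hc : c^2 ≤ 1) :
    1/6 - (c^2 - (1-c^2))/6 + pw0 l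
        + (1/9)*(1/2 + (c^2 - (1-c^2))/2)
      + ((l/3)*(1-c^2)*c*(L1 - L2)
        + (4*l^2/9)*((1-c^2))^2*(1/(1+4*l^2-4*l*c) + 1/(1+4*l^2+4*l*c)))
      + (s1 * (1/(l*π^2) + l/3*(2*c^2 - 1)) * (AT + π)
        + ((l/3 - 1/(l*π^2))*c - 2*l/9*c^3) * (4*l*c*(4*l^2-1))
            / ((4*l^2-1)^2 + (4*l)^2*(1-c^2)))
      + pwD l * (2 + 2*(2*pwE l*(c^2 - (1-c^2))
              * (pwC l + pws l - pwE l*(c^2 - (1-c^2)))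
            - 8*(pwE l)^2*((1-c^2)*c^2))
          / ((pwC l + pws l - pwE l*(c^2 - (1-c^2)))^2
            + 4*(pwE l)^2*((1-c^2)*c^2))) / pws l
    = (1-c^2)/3 + (l*(1-c^2)*c/3)*(L1 - L2)
      + s1 * (1/(l*π^2) + l/3*(2*c^2 - 1)) * (AT + π) := by
  have h4l2 : 4*l^2 < 1 := by nlinarith
  have hD : (0:ℝ) < 1-4*l^2 := by linarith
  have h4l1 : 4*l^2 - 1 ≠ 0 := by nlinarith
  have hA1 : 0 < 1 + 4*l^2 - 4*l*c := by
    nlinarith [mul_pos (show (0:ℝ) < 1-2*l by linarith) (show (0:ℝ) < 1-2*l by linarith),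
      sq_nonneg (c-1), sq_nonneg (c+1)]
  have hA2 : 0 < 1 + 4*l^2 + 4*l*c := by
    nlinarith [mul_pos (show (0:ℝ) < 1-2*l by linarith) (show (0:ℝ) < 1-2*l by linarith),
      sq_nonneg (c-1), sq_nonneg (c+1)]
  have hK1 : ((4*l^2-1)^2 + (4*l)^2*(1-c^2)) ≠ 0 := by
    nlinarith [mul_pos hD hD, sq_nonneg (4*l), sq_nonneg c]
  have hdd : 0 < pwC l + pws l - pwE l*(c^2 - (1-c^2)) := by
    simp only [pwC, pwE, pws]
    nlinarith [mul_pos hD (show (0:ℝ) < 1+4*l^2 by positivity), mul_pos hD hD, sq_nonneg c]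
  have hK2 : ((pwC l + pws l - pwE l*(c^2 - (1-c^2)))^2
      + 4*(pwE l)^2*((1-c^2)*c^2)) ≠ 0 := by
    have h2 : (0:ℝ) ≤ 4*(pwE l)^2*((1-c^2)*c^2) := by
      have : (0:ℝ) ≤ (1-c^2) := by linarith
      positivity
    nlinarith [pow_pos hdd 2]
  have hpws : pws l ≠ 0 := by
    simp only [pws]; positivity
  have hl : l ≠ 0 := hl0.ne'
  have hpi : π ≠ 0 := pi_ne_zero
  simp only [pw0, pwD, pwC, pwE, pws] at *
  have n1 : 1 + 4*l^2 - c*4*l ≠ 0 := by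
    rw [show 1 + 4*l^2 - c*4*l = 1 + 4*l^2 - 4*l*c by ring]; exact hA1.ne'
  have n2 : 1 + 4*l^2 + c*4*l ≠ 0 := by
    rw [show 1 + 4*l^2 + c*4*l = 1 + 4*l^2 + 4*l*c by ring]; exact hA2.ne'
  have n3 : (4*l^2-1)^2 + (1-c^2)*4^2*l^2 ≠ 0 := by
    rw [show (4*l^2-1)^2 + (1-c^2)*4^2*l^2 = (4*l^2-1)^2 + (4*l)^2*(1-c^2) by ring]; exact hK1
  have n4 : (2*(1+4*l^2)^2 - 4^2*l^2 + 2*(1+4*l^2)*(1-4*l^2) - (c^2-(1-c^2))*4^2*l^2)^2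
      + c^2*(1-c^2)*4^5*l^4 ≠ 0 := by
    convert hK2 using 1; ring
  field_simp
  ring

lemma pw_cont (l : ℝ) (hl0 : 0 < l) (hl1 : l < 1/2) :
    Continuous (fun ν => planeWaveG l (Real.sin ν) (Real.cos ν)) := by
  have hA1 : ∀ ν:ℝ, 0 < 1+4*l^2-4*l*Real.cos ν := fun ν => by
    nlinarith [Real.cos_le_one ν, mul_pos (show (0:ℝ) < 1-2*l by linarith)
      (show (0:ℝ) < 1-2*l by linarith)]
  have hA2 : ∀ ν:ℝ, 0 < 1+4*l^2+4*l*Real.cos ν := fun ν => by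
    nlinarith [Real.neg_one_le_cos ν, mul_pos (show (0:ℝ) < 1-2*l by linarith)
      (show (0:ℝ) < 1-2*l by linarith)]
  unfold planeWaveG
  refine Continuous.add (Continuous.add (by fun_prop) (Continuous.mul (by fun_prop) ?_)) ?_
  · exact Continuous.log ((by fun_prop : Continuous fun ν =>
        1+4*l^2-4*l*Real.cos ν).div (by fun_prop) (fun ν => (hA2 ν).ne'))
      (fun ν => (div_pos (hA1 ν) (hA2 ν)).ne')
  · refine Continuous.mul (Continuous.mul continuous_sin.abs (by fun_prop)) ?_
    exact (Real.continuous_arctan.comp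
      (((continuous_const.mul continuous_sin.abs).div_const _))).add continuous_const

lemma planeWaveG_neg_right (l n1 n2 : ℝ) : planeWaveG l n1 (-n2) = planeWaveG l n1 n2 := by
  unfold planeWaveG
  rw [show (1 + 4*l^2 - 4*l*(-n2)) = 1 + 4*l^2 + 4*l*n2 by ring,
      show (1 + 4*l^2 + 4*l*(-n2)) = 1 + 4*l^2 - 4*l*n2 by ring,
      show (1 + 4*l^2 + 4*l*n2)/(1 + 4*l^2 - 4*l*n2)
         = ((1 + 4*l^2 - 4*l*n2)/(1 + 4*l^2 + 4*l*n2))⁻¹ from (inv_div _ _).symm,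
      Real.log_inv]
  ring

lemma planeWaveG_neg_left (l n1 n2 : ℝ) : planeWaveG l (-n1) n2 = planeWaveG l n1 n2 := by
  unfold planeWaveG; rw [abs_neg]; ring

theorem expectation_G_random_plane_wave (lam0 : ℝ) (h0 : 0 < lam0) (h1 : lam0 < 1 / 2) :
    (1 / π) * ∫ ν in (0 : ℝ)..π,
        (planeWaveG lam0 (Real.cos ν) (Real.sin ν)
          + planeWaveG lam0 (Real.sin ν) (Real.cos ν))
      = 4 / (π ^ 2 * lam0) - (4 / 9) * lam0 + 1 / 3 - 4 / π ^ 2 := by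
  have hcont : Continuous (fun ν => planeWaveG lam0 (Real.sin ν) (Real.cos ν)) :=
    pw_cont lam0 h0 h1
  have hshift : Continuous (fun ν : ℝ =>
      planeWaveG lam0 (Real.sin (ν + π/2)) (Real.cos (ν + π/2))) :=
    hcont.comp (continuous_id.add continuous_const)
  have hper : Function.Periodic (fun ν => planeWaveG lam0 (Real.sin ν) (Real.cos ν)) π := by
    intro ν
    simp only [Real.sin_add_pi, Real.cos_add_pi]
    rw [planeWaveG_neg_left, planeWaveG_neg_right]
  have h2 : (∫ ν in (0:ℝ)..π, (planeWaveG lam0 (Real.cos ν) (Real.sin ν)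
        + planeWaveG lam0 (Real.sin ν) (Real.cos ν)))
      = (∫ ν in (0:ℝ)..π, planeWaveG lam0 (Real.sin (ν + π/2)) (Real.cos (ν + π/2)))
        + ∫ ν in (0:ℝ)..π, planeWaveG lam0 (Real.sin ν) (Real.cos ν) := by
    rw [← intervalIntegral.integral_add (hshift.intervalIntegrable _ _) (hcont.intervalIntegrable _ _)]
    apply intervalIntegral.integral_congr
    intro ν _
    simp only []
    rw [Real.sin_add_pi_div_two, Real.cos_add_pi_div_two, planeWaveG_neg_right]
  have h3 : (∫ ν in (0:ℝ)..π, planeWaveG lam0 (Real.sin (ν + π/2)) (Real.cos (ν + π/2)))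
      = ∫ ν in (0:ℝ)..π, planeWaveG lam0 (Real.sin ν) (Real.cos ν) := by
    rw [intervalIntegral.integral_comp_add_right
      (fun ν => planeWaveG lam0 (Real.sin ν) (Real.cos ν)) (π/2),
      show (0:ℝ) + π/2 = π/2 by ring, show π + π/2 = π/2 + π by ring,
      hper.intervalIntegral_add_eq (π/2) 0, zero_add]
  have hderiv : ∀ x ∈ Set.uIcc (0:ℝ) π, HasDerivAt (pwF lam0)
      (planeWaveG lam0 (Real.sin x) (Real.cos x)) x := by
    intro x hx
    rw [Set.uIcc_of_le Real.pi_pos.le] at hx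
    have hsx : 0 ≤ Real.sin x := Real.sin_nonneg_of_nonneg_of_le_pi hx.1 hx.2
    have h4l2 : 4*lam0^2 < 1 := by nlinarith
    have hA1 : 0 < 1 + 4*lam0^2 - 4*lam0*Real.cos x := by
      nlinarith [Real.cos_le_one x, mul_pos (show (0:ℝ) < 1-2*lam0 by linarith)
        (show (0:ℝ) < 1-2*lam0 by linarith)]
    have hA2 : 0 < 1 + 4*lam0^2 + 4*lam0*Real.cos x := by
      nlinarith [Real.neg_one_le_cos x, mul_pos (show (0:ℝ) < 1-2*lam0 by linarith)
        (show (0:ℝ) < 1-2*lam0 by linarith)]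
    have h := pwF_hasDerivAt lam0 x h0 h1
    have hkey : planeWaveG lam0 (Real.sin x) (Real.cos x)
        = ( 1/6 - (Real.cos x^2 - Real.sin x^2)/6 + pw0 lam0
          + (1/9)*(1/2 + (Real.cos x^2 - Real.sin x^2)/2)
        + ((lam0/3)*Real.sin x^2*Real.cos x*
            (Real.log (1+4*lam0^2-4*lam0*Real.cos x) - Real.log (1+4*lam0^2+4*lam0*Real.cos x))
          + (4*lam0^2/9)*(Real.sin x^2)^2*(1/(1+4*lam0^2-4*lam0*Real.cos x)
              + 1/(1+4*lam0^2+4*lam0*Real.cos x)))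
        + (Real.sin x * (1/(lam0*π^2) + lam0/3*(2*Real.cos x^2 - 1)) *
            (Real.arctan (4*lam0*Real.sin x/(4*lam0^2-1)) + π)
          + ((lam0/3 - 1/(lam0*π^2))*Real.cos x - 2*lam0/9*Real.cos x^3)
              * (4*lam0*Real.cos x*(4*lam0^2-1))
              / ((4*lam0^2-1)^2 + (4*lam0)^2*Real.sin x^2))
        + pwD lam0 * (2 + 2*(2*pwE lam0*(Real.cos x^2 - Real.sin x^2)
                * (pwC lam0 + pws lam0 - pwE lam0*(Real.cos x^2 - Real.sin x^2))
              - 8*(pwE lam0)^2*(Real.sin x^2*Real.cos x^2))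
            / ((pwC lam0 + pws lam0 - pwE lam0*(Real.cos x^2 - Real.sin x^2))^2
              + 4*(pwE lam0)^2*(Real.sin x^2*Real.cos x^2))) / pws lam0 ) := by
      unfold planeWaveG
      rw [abs_of_nonneg hsx, Real.log_div hA1.ne' hA2.ne', Real.sin_sq]
      exact (pw_key lam0 (Real.cos x) (Real.sin x) _ _ _ h0 h1 (Real.cos_sq_le_one x)).symm
    rw [hkey]
    exact h
  have hFTC : (∫ ν in (0:ℝ)..π, planeWaveG lam0 (Real.sin ν) (Real.cos ν))
      = pwF lam0 π - pwF lam0 0 :=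
    intervalIntegral.integral_eq_sub_of_hasDerivAt hderiv (hcont.intervalIntegrable _ _)
  rw [h2, h3, hFTC]
  have h4l2 : 4*lam0^2 < 1 := by nlinarith
  have hl : lam0 ≠ 0 := h0.ne'
  have hpi : π ≠ 0 := Real.pi_ne_zero
  have hD : (1:ℝ) - 4*lam0^2 ≠ 0 := by nlinarith
  have hA : (1:ℝ) + 4*lam0^2 ≠ 0 := by positivity
  simp only [pwF, pw0, pwD, pwC, pwE, pws, Real.sin_pi, Real.cos_pi, Real.sin_zero,
    Real.cos_zero, mul_zero, zero_mul, zero_div, mul_one, Real.arctan_zero]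
  norm_num
  field_simp
  ring
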